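/- Let b > 0 and f(x) = 1/(x² + b²). Then for every n ≥ 0, the supremum norm of the (2n)-th derivative of f on [−1,1] is at most (2n)!/b^(2n+2), and in fact |f^(2n)(0)| = (2n)!/b^(2n+2). -/

import Mathlib

open Real Complex

private lemma aux_ne (b : ℝ) (hb : 0 < b) (x : ℝ) : (x : ℂ) - Complex.I * b ≠ 0 := by
  intro h
  have h2 : ((x : ℂ) - Complex.I * b).im = -b := by simp
  rw [h] at h2
  simp at h2
  linarith

private lemma aux_hasDerivAt (b : ℝ) (hb : 0 < b) (c : ℂ) (m : ℤ) (x : ℝ) :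
    HasDerivAt (fun x : ℝ => (c * ((x : ℂ) - Complex.I * b) ^ m).im)
      ((c * (m * ((x : ℂ) - Complex.I * b) ^ (m - 1))).im) x := by
  have h1 : HasDerivAt (fun z : ℂ => c * (z - Complex.I * b) ^ m)
      (c * ((m : ℂ) * ((x : ℂ) - Complex.I * b) ^ (m - 1) * 1)) (x : ℝ) := by
    have hz : HasDerivAt (fun z : ℂ => z - Complex.I * b) 1 (x : ℂ) :=
      (hasDerivAt_id _).sub_const _
    have := (hasDerivAt_zpow m ((x : ℂ) - Complex.I * b) (Or.inl (aux_ne b hb x))).comp (x : ℂ) hz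
    exact this.const_mul c
  have h2 := h1.comp_ofReal
  have h3 := Complex.imCLM.hasFDerivAt.comp_hasDerivAt x h2
  simpa [Function.comp_def] using h3

private lemma key (b : ℝ) (hb : 0 < b) (k : ℕ) :
    iteratedDeriv k (fun x : ℝ => 1 / (x ^ 2 + b ^ 2)) = fun x : ℝ =>
      (1 / b) * ((((-1 : ℂ) ^ k * k.factorial) * ((x : ℂ) - Complex.I * b) ^ (-(k + 1) : ℤ)).im) := by
  induction k with
  | zero =>
    funext x
    have hpos : (0:ℝ) < x ^ 2 + b ^ 2 := by positivity
    simp only [iteratedDeriv_zero, pow_zero, Nat.factorial_zero, Nat.cast_one, one_mul,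
      Nat.cast_zero, zero_add]
    rw [zpow_neg_one, Complex.inv_im]
    have him : ((x : ℂ) - Complex.I * b).im = -b := by simp
    have hnsq : Complex.normSq ((x : ℂ) - Complex.I * b) = x ^ 2 + b ^ 2 := by
      simp [Complex.normSq_apply]; ring
    rw [him, hnsq]
    field_simp
  | succ k ih =>
    funext x
    rw [iteratedDeriv_succ, ih]
    have hd := (aux_hasDerivAt b hb ((-1 : ℂ) ^ k * k.factorial) (-(k + 1) : ℤ) x).const_mul (1 / b : ℝ)
    rw [hd.deriv]
    rw [show ((-(k+1) : ℤ) - 1) = (-((k:ℤ)+1+1)) by ring]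
    push_cast
    congr 1
    congr 1
    push_cast [Nat.factorial_succ]
    ring

private lemma aux_abs_ge (b : ℝ) (hb : 0 < b) (x : ℝ) :
    b ≤ ‖(x : ℂ) - Complex.I * b‖ := by
  have h := Complex.abs_im_le_norm ((x : ℂ) - Complex.I * b)
  have him : ((x : ℂ) - Complex.I * b).im = -b := by simp
  rw [him] at h
  rwa [abs_of_nonpos (by linarith), neg_neg] at h

theorem deriv_bound_cauchy_kernel (b : ℝ) (hb : 0 < b) (n : ℕ) :
    (∀ x ∈ Set.Icc (-1 : ℝ) 1,
      |iteratedDeriv (2 * n) (fun x : ℝ => 1 / (x ^ 2 + b ^ 2)) x|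
        ≤ ((2 * n).factorial : ℝ) / b ^ (2 * n + 2)) ∧
    |iteratedDeriv (2 * n) (fun x : ℝ => 1 / (x ^ 2 + b ^ 2)) 0|
      = ((2 * n).factorial : ℝ) / b ^ (2 * n + 2) := by
  have hneg : ((-1 : ℂ) ^ (2 * n)) = 1 := by
    rw [pow_mul]; norm_num
  have hexp : (-(((2*n : ℕ) : ℤ) + 1)) = -(((2*n+1 : ℕ) : ℤ)) := by push_cast; ring
  constructor
  · intro x _
    rw [congrFun (key b hb (2 * n)) x]
    set z := (x : ℂ) - Complex.I * b with hz
    have hzne : z ≠ 0 := aux_ne b hb x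
    have habs : b ≤ ‖z‖ := aux_abs_ge b hb x
    have habs0 : 0 < ‖z‖ := lt_of_lt_of_le hb habs
    have h1 : |((((-1 : ℂ) ^ (2*n) * (2*n).factorial) * z ^ (-(((2*n : ℕ) : ℤ) + 1))).im)|
        ≤ ((2*n).factorial : ℝ) * (‖z‖ ^ (2*n+1))⁻¹ := by
      calc |((((-1 : ℂ) ^ (2*n) * (2*n).factorial) * z ^ (-(((2*n : ℕ) : ℤ) + 1))).im)|
          ≤ ‖((-1 : ℂ) ^ (2*n) * (2*n).factorial) * z ^ (-(((2*n : ℕ) : ℤ) + 1))‖ :=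
            Complex.abs_im_le_norm _
        _ = ((2*n).factorial : ℝ) * (‖z‖ ^ (2*n+1))⁻¹ := by
            rw [norm_mul, norm_zpow, hneg, hexp, zpow_neg, zpow_natCast, one_mul,
              Complex.norm_natCast]
    have h2 : (‖z‖ ^ (2*n+1))⁻¹ ≤ (b ^ (2*n+1))⁻¹ := by
      apply inv_anti₀ (by positivity)
      exact pow_le_pow_left₀ hb.le habs _
    calc |1 / b * ((((-1 : ℂ) ^ (2*n) * (2*n).factorial) * z ^ (-(((2*n : ℕ) : ℤ) + 1))).im)|
        = (1/b) * |((((-1 : ℂ) ^ (2*n) * (2*n).factorial) * z ^ (-(((2*n : ℕ) : ℤ) + 1))).im)| := by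
          rw [abs_mul, abs_of_pos (by positivity)]
      _ ≤ (1/b) * (((2*n).factorial : ℝ) * (b ^ (2*n+1))⁻¹) := by
          apply mul_le_mul_of_nonneg_left _ (by positivity)
          exact h1.trans (mul_le_mul_of_nonneg_left h2 (by positivity))
      _ = ((2*n).factorial : ℝ) / b ^ (2*n+2) := by
          field_simp
          try ring
          try tauto
  · rw [congrFun (key b hb (2 * n)) 0]
    have hz0 : ((0:ℝ) : ℂ) - Complex.I * b = -(Complex.I * b) := by push_cast; ring
    have hpow : (-(Complex.I * (b:ℂ))) ^ (2*n+1) = (-1 : ℂ)^(n+1) * Complex.I * (b:ℂ)^(2*n+1) := by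
      rw [neg_pow, mul_pow]
      have hI : Complex.I ^ (2*n+1) = (-1:ℂ)^n * Complex.I := by
        rw [pow_succ, pow_mul, Complex.I_sq]
      have hm1 : (-1 : ℂ) ^ (2*n+1) = -1 := by
        rw [pow_succ, pow_mul]; norm_num
      rw [hI, hm1, pow_succ]
      ring
    have hzpow : (((0:ℝ) : ℂ) - Complex.I * b) ^ (-(((2*n : ℕ) : ℤ) + 1))
        = (-1 : ℂ)^n * Complex.I * ((b:ℂ)^(2*n+1))⁻¹ := by
      rw [hexp, zpow_neg, zpow_natCast, hz0, hpow]
      have hbne : ((b:ℂ)^(2*n+1)) ≠ 0 := by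
        apply pow_ne_zero
        exact_mod_cast ne_of_gt hb
      rw [mul_inv, mul_inv, Complex.inv_I]
      have : ((-1 : ℂ)^(n+1))⁻¹ = (-1:ℂ)^(n+1) := by
        rw [← inv_pow, inv_neg, inv_one]
      rw [this, pow_succ]
      ring
    rw [hzpow, hneg]
    have him : (((1:ℂ) * (2*n).factorial) * ((-1 : ℂ)^n * Complex.I * ((b:ℂ)^(2*n+1))⁻¹)).im
        = (-1:ℝ)^n * ((2*n).factorial : ℝ) * ((b:ℝ)^(2*n+1))⁻¹ := by
      have hc : ((1:ℂ) * (2*n).factorial) * ((-1 : ℂ)^n * Complex.I * ((b:ℂ)^(2*n+1))⁻¹)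
          = (((-1:ℝ)^n * ((2*n).factorial : ℝ) * ((b:ℝ)^(2*n+1))⁻¹ : ℝ) : ℂ) * Complex.I := by
        push_cast
        ring
      rw [hc]
      simp only [Complex.mul_im, Complex.ofReal_re, Complex.ofReal_im, Complex.I_im,
        Complex.I_re, mul_one, mul_zero, add_zero, zero_mul, zero_add]
    rw [him]
    rw [abs_mul, abs_mul, abs_mul, _root_.abs_pow, abs_neg, abs_one, one_pow, one_mul,
      _root_.abs_of_pos (by positivity : (0:ℝ) < 1/b), Nat.abs_cast, abs_inv, _root_.abs_pow,
      _root_.abs_of_pos hb]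
    field_simp
    try ring
    try tauto
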